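/- Let A be a maximally dissipative operator on H with boundary operators Γ, Γ_*. The reducing subspace of A corresponding to its completely non-selfadjoint part equals the closed linear span H_cns = span{ (Γ(A+λ)^{-1})*E : Im λ > 0 } ∨ span{ (Γ_*(A*+μ)^{-1})*E_* : Im μ < 0 }, and A restricted to the orthogonal complement H ⊖ H_cns is selfadjoint. -/

import Mathlib

open Complex MeasureTheory

noncomputable section

variable {H : Type*} [NormedAddCommGroup H] [InnerProductSpace ℂ H] [CompleteSpace H]

local notation "⟪" x ", " y "⟫" => @inner ℂ _ _ x y

private lemma le_zero_of_forall_le_mul' {a D : ℝ} (h : ∀ t : ℝ, 0 < t → a ≤ t * D) : a ≤ 0 := by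
  by_contra hc
  push_neg at hc
  rcases le_or_gt D 0 with hD | hD
  · have := h 1 one_pos; nlinarith
  · have h2 := h (a / (2 * D)) (by positivity)
    have h3 : a / (2 * D) * D = a / 2 := by field_simp
    rw [h3] at h2; nlinarith

private lemma norm_eq_zero_of_forall_le_mul' {X : Type*} [NormedAddCommGroup X] {x : X} {D : ℝ}
    (h : ∀ t : ℝ, 0 < t → ‖x‖ ≤ t * D) : x = 0 :=
  norm_le_zero_iff.mp (le_zero_of_forall_le_mul' h)

private lemma im_add_mul_sq' (z lam : ℂ) (r : ℝ) :
    (z + lam * (r : ℂ)^2).im = z.im + lam.im * r^2 := by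
  simp [Complex.add_im, Complex.mul_im, ← Complex.ofReal_pow]

private lemma two_im_eq' {E : Type*} [NormedAddCommGroup E] [InnerProductSpace ℂ E]
    (z : ℂ) (g : E) (h : z - (starRingEnd ℂ) z = Complex.I * ⟪g, g⟫) :
    2 * z.im = ‖g‖^2 := by
  have h2 : ⟪g, g⟫ = ((‖g‖^2 : ℝ) : ℂ) := by
    rw [inner_self_eq_norm_sq_to_K]; norm_cast
  rw [h2] at h
  have := congrArg Complex.im h
  simp at this
  rw [two_mul, this]; norm_cast


/-- `A` is dissipative: densely defined with `Im ⟨Au,u⟩ ≥ 0`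
(the paper's inner product is linear in the first slot, so `⟨Au,u⟩ = ⟪u, Au⟫` in
Mathlib's convention). -/
def IsDissipative (A : H →ₗ.[ℂ] H) : Prop :=
  Dense (A.domain : Set H) ∧ ∀ u : A.domain, 0 ≤ (⟪(u : H), A u⟫).im

/-- Maximally dissipative: dissipative with no nontrivial dissipative extension. -/
def IsMaxDissipative (A : H →ₗ.[ℂ] H) : Prop :=
  IsDissipative A ∧ ∀ B : H →ₗ.[ℂ] H, IsDissipative B → A ≤ B → B = A

/-- `R` is the everywhere-defined bounded resolvent `(A - z)⁻¹` of `A`. -/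
def IsResolventAt (A : H →ₗ.[ℂ] H) (z : ℂ) (R : H →L[ℂ] H) : Prop :=
  (∀ u : A.domain, R (A u - z • (u : H)) = (u : H)) ∧
  ∀ h : H, ∃ u : A.domain, (u : H) = R h ∧ A u - z • (u : H) = h

set_option maxHeartbeats 3000000 in
/-- Langer decomposition: the closed span `H_cns` of the ranges of `(Γ(A+λ)⁻¹)*`
(`Im λ > 0`) and `(Γ_*(A*+μ)⁻¹)*` (`Im μ < 0`) is a reducing subspace for `A`, and the
restriction of `A` to its orthogonal complement `H_sa = H ⊖ H_cns` is selfadjoint. -/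
theorem langer_decomposition
    {E Es : Type*} [NormedAddCommGroup E] [InnerProductSpace ℂ E] [CompleteSpace E]
    [NormedAddCommGroup Es] [InnerProductSpace ℂ Es] [CompleteSpace Es]
    (A : H →ₗ.[ℂ] H) (hA : IsMaxDissipative A)
    (Γ : A.domain →ₗ[ℂ] E) (Γs : A.adjoint.domain →ₗ[ℂ] Es)
    (hΓd : DenseRange Γ) (hΓsd : DenseRange Γs)
    (hLag : ∀ u v : A.domain, ⟪(v : H), A u⟫ - ⟪A v, (u : H)⟫ = Complex.I * ⟪Γ v, Γ u⟫)
    (hLagS : ∀ u v : A.adjoint.domain,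
      ⟪(v : H), A.adjoint u⟫ - ⟪A.adjoint v, (u : H)⟫ = -(Complex.I * ⟪Γs v, Γs u⟫))
    -- `Gp λ = Γ(A+λ)⁻¹` for `Im λ > 0`, `Gm μ = Γ_*(A*+μ)⁻¹` for `Im μ < 0`
    (Gp : ℂ → H →L[ℂ] E) (Gm : ℂ → H →L[ℂ] Es)
    (hGp : ∀ lam : ℂ, 0 < lam.im → ∀ u : A.domain, Gp lam (A u + lam • (u : H)) = Γ u)
    (hGm : ∀ mu : ℂ, mu.im < 0 →
      ∀ u : A.adjoint.domain, Gm mu (A.adjoint u + mu • (u : H)) = Γs u)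
    (hRp : ∀ lam : ℂ, 0 < lam.im → ∃ R : H →L[ℂ] H, IsResolventAt A (-lam) R)
    (hRm : ∀ mu : ℂ, mu.im < 0 → ∃ R : H →L[ℂ] H, IsResolventAt A.adjoint (-mu) R)
    (K : Submodule ℂ H)
    (hK : K = (Submodule.span ℂ
      ((⋃ lam ∈ {z : ℂ | 0 < z.im}, Set.range (ContinuousLinearMap.adjoint (Gp lam))) ∪
       (⋃ mu ∈ {z : ℂ | z.im < 0},
          Set.range (ContinuousLinearMap.adjoint (Gm mu))))).topologicalClosure) :
    -- `K = H_cns` reduces `A` :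
    (∀ u : A.domain, ∃ v : A.domain, (v : H) ∈ K ∧ (u : H) - (v : H) ∈ Kᗮ) ∧
    (∀ u : A.domain, (u : H) ∈ K → A u ∈ K) ∧
    (∀ u : A.domain, (u : H) ∈ Kᗮ → A u ∈ Kᗮ) ∧
    -- the restriction of `A` to `H_sa = Kᗮ` is selfadjoint :
    ((Kᗮ : Set H) ⊆ closure (Subtype.val '' {u : A.domain | (u : H) ∈ Kᗮ}) ∧
     (∀ u v : A.domain, (u : H) ∈ Kᗮ → (v : H) ∈ Kᗮ → ⟪A u, (v : H)⟫ = ⟪(u : H), A v⟫) ∧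
     (∀ w ∈ Kᗮ, ∃ u : A.domain, (u : H) ∈ Kᗮ ∧ A u + Complex.I • (u : H) = w) ∧
     (∀ w ∈ Kᗮ, ∃ u : A.domain, (u : H) ∈ Kᗮ ∧ A u - Complex.I • (u : H) = w)) := by
  classical
  obtain ⟨⟨hdense, hdiss⟩, hmax⟩ := hA
  choose R hres using hRp
  choose S hres' using hRm
  -- basic resolvent facts
  have hR1 : ∀ lam (hl : 0 < lam.im) (u : A.domain), R lam hl (A u + lam • (u : H)) = (u : H) := by
    intro lam hl u
    have := (hres lam hl).1 u
    rwa [neg_smul, sub_neg_eq_add] at this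
  have hR2 : ∀ lam (hl : 0 < lam.im) (h : H),
      ∃ u : A.domain, (u : H) = R lam hl h ∧ A u + lam • (u : H) = h := by
    intro lam hl h
    obtain ⟨u, h1, h2⟩ := (hres lam hl).2 h
    rw [neg_smul, sub_neg_eq_add] at h2
    exact ⟨u, h1, h2⟩
  have hS1 : ∀ mu (hm : mu.im < 0) (v : A.adjoint.domain),
      S mu hm (A.adjoint v + mu • (v : H)) = (v : H) := by
    intro mu hm v
    have := (hres' mu hm).1 v
    rwa [neg_smul, sub_neg_eq_add] at this
  have hS2 : ∀ mu (hm : mu.im < 0) (h : H),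
      ∃ v : A.adjoint.domain, (v : H) = S mu hm h ∧ A.adjoint v + mu • (v : H) = h := by
    intro mu hm h
    obtain ⟨v, h1, h2⟩ := (hres' mu hm).2 h
    rw [neg_smul, sub_neg_eq_add] at h2
    exact ⟨v, h1, h2⟩
  -- imaginary part formulas
  have hIm : ∀ u : A.domain, 2 * (⟪(u : H), A u⟫).im = ‖Γ u‖^2 := by
    intro u
    apply two_im_eq'
    rw [inner_conj_symm]
    exact hLag u u
  have hImS : ∀ v : A.adjoint.domain, 2 * (⟪(v : H), A.adjoint v⟫).im = -‖Γs v‖^2 := by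
    intro v
    have h := hLagS v v
    have h4 : ⟪(A.adjoint v : H), (v : H)⟫ = (starRingEnd ℂ) ⟪(v : H), (A.adjoint v : H)⟫ :=
      (inner_conj_symm _ _).symm
    rw [h4] at h
    have h2 : ⟪Γs v, Γs v⟫ = ((‖Γs v‖^2 : ℝ) : ℂ) := by
      rw [inner_self_eq_norm_sq_to_K]; norm_cast
    rw [h2] at h
    have h3 := congrArg Complex.im h
    rw [Complex.sub_im, Complex.conj_im, Complex.neg_im, Complex.mul_im] at h3
    simp only [Complex.I_re, Complex.I_im, Complex.ofReal_re, Complex.ofReal_im] at h3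
    linarith
  -- norm bounds for resolvents
  have hRnorm : ∀ lam (hl : 0 < lam.im) (h : H), lam.im * ‖R lam hl h‖ ≤ ‖h‖ := by
    intro lam hl h
    obtain ⟨u, h1, h2⟩ := hR2 lam hl h
    rw [← h1]
    rcases eq_or_lt_of_le (norm_nonneg (u : H)) with h0 | h0
    · rw [← h0, mul_zero]; exact norm_nonneg h
    have e1 : ⟪(u : H), h⟫ = ⟪(u : H), A u⟫ + lam * ((‖(u:H)‖ : ℂ))^2 := by
      rw [← h2, inner_add_right, inner_smul_right, inner_self_eq_norm_sq_to_K]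
      norm_cast
    have e2 : lam.im * ‖(u:H)‖^2 ≤ (⟪(u : H), h⟫).im := by
      rw [e1, im_add_mul_sq']
      have him : 0 ≤ (⟪(u : H), A u⟫).im := by
        have := hIm u; nlinarith [sq_nonneg ‖Γ u‖]
      linarith
    have e3 : (⟪(u : H), h⟫).im ≤ ‖(u:H)‖ * ‖h‖ := by
      calc (⟪(u : H), h⟫).im ≤ |(⟪(u : H), h⟫).im| := le_abs_self _
        _ ≤ ‖⟪(u : H), h⟫‖ := Complex.abs_im_le_norm _
        _ = ‖⟪(u : H), h⟫‖ := rfl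
        _ ≤ ‖(u:H)‖ * ‖h‖ := norm_inner_le_norm _ _
    have e4 := le_trans e2 e3
    have e5 : ‖(u:H)‖ * (lam.im * ‖(u:H)‖) ≤ ‖(u:H)‖ * ‖h‖ := by nlinarith
    exact le_of_mul_le_mul_left e5 h0
  have hSnorm : ∀ mu (hm : mu.im < 0) (h : H), (-mu.im) * ‖S mu hm h‖ ≤ ‖h‖ := by
    intro mu hm h
    obtain ⟨v, h1, h2⟩ := hS2 mu hm h
    rw [← h1]
    rcases eq_or_lt_of_le (norm_nonneg (v : H)) with h0 | h0
    · rw [← h0, mul_zero]; exact norm_nonneg h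
    have e1 : ⟪(v : H), h⟫ = ⟪(v : H), A.adjoint v⟫ + mu * ((‖(v:H)‖ : ℂ))^2 := by
      rw [← h2, inner_add_right, inner_smul_right, inner_self_eq_norm_sq_to_K]
      norm_cast
    have e2 : (-mu.im) * ‖(v:H)‖^2 ≤ -(⟪(v : H), h⟫).im := by
      rw [e1, im_add_mul_sq']
      have him : (⟪(v : H), A.adjoint v⟫).im ≤ 0 := by
        have := hImS v; nlinarith [sq_nonneg ‖Γs v‖]
      nlinarith
    have e3 : -(⟪(v : H), h⟫).im ≤ ‖(v:H)‖ * ‖h‖ := by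
      calc -(⟪(v : H), h⟫).im ≤ |(⟪(v : H), h⟫).im| := neg_le_abs _
        _ ≤ ‖⟪(v : H), h⟫‖ := Complex.abs_im_le_norm _
        _ = ‖⟪(v : H), h⟫‖ := rfl
        _ ≤ ‖(v:H)‖ * ‖h‖ := norm_inner_le_norm _ _
    have e4 := le_trans e2 e3
    have e5 : ‖(v:H)‖ * ((-mu.im) * ‖(v:H)‖) ≤ ‖(v:H)‖ * ‖h‖ := by nlinarith
    exact le_of_mul_le_mul_left e5 h0
  -- characterization of membership in Kᗮ
  have hKmem : ∀ w : H, w ∈ Kᗮ ↔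
      ((∀ lam, ∀ hl : 0 < lam.im, Gp lam w = 0) ∧ (∀ mu, ∀ hm : mu.im < 0, Gm mu w = 0)) := by
    intro w
    constructor
    · intro hw
      have hgen : ∀ g ∈ ((⋃ lam ∈ {z : ℂ | 0 < z.im},
          Set.range (ContinuousLinearMap.adjoint (Gp lam))) ∪
          (⋃ mu ∈ {z : ℂ | z.im < 0},
          Set.range (ContinuousLinearMap.adjoint (Gm mu)))), ⟪g, w⟫ = 0 := by
        intro g hg
        exact (Submodule.mem_orthogonal K w).mp hw g
          (hK ▸ Submodule.le_topologicalClosure _ (Submodule.subset_span hg))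
      constructor
      · intro lam hl
        rw [← inner_self_eq_zero (𝕜 := ℂ)]
        rw [← ContinuousLinearMap.adjoint_inner_left]
        exact hgen _ (Set.mem_union_left _
          (Set.mem_biUnion (show lam ∈ {z : ℂ | 0 < z.im} from hl) ⟨Gp lam w, rfl⟩))
      · intro mu hm
        rw [← inner_self_eq_zero (𝕜 := ℂ)]
        rw [← ContinuousLinearMap.adjoint_inner_left]
        exact hgen _ (Set.mem_union_right _
          (Set.mem_biUnion (show mu ∈ {z : ℂ | z.im < 0} from hm) ⟨Gm mu w, rfl⟩))
    · rintro ⟨hp, hm'⟩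
      have hKle : K ≤ (ℂ ∙ w)ᗮ := by
        rw [hK]
        apply Submodule.topologicalClosure_minimal
        · rw [Submodule.span_le]
          rintro g (hg | hg)
          · obtain ⟨lam, hlam, hg2⟩ := Set.mem_iUnion₂.mp hg
            obtain ⟨e, rfl⟩ := hg2
            simp only [SetLike.mem_coe]
            rw [Submodule.mem_orthogonal_singleton_iff_inner_right,
              ContinuousLinearMap.adjoint_inner_right, hp lam hlam, inner_zero_left]
          · obtain ⟨mu, hmu, hg2⟩ := Set.mem_iUnion₂.mp hg
            obtain ⟨e, rfl⟩ := hg2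
            simp only [SetLike.mem_coe]
            rw [Submodule.mem_orthogonal_singleton_iff_inner_right,
              ContinuousLinearMap.adjoint_inner_right, hm' mu hmu, inner_zero_left]
        · exact Submodule.isClosed_orthogonal _
      rw [Submodule.mem_orthogonal]
      intro v hv
      have := Submodule.mem_orthogonal_singleton_iff_inner_right.mp (hKle hv)
      rw [← inner_conj_symm, this, map_zero]
  -- keyA : domain elements with vanishing Γ lie in the adjoint domain
  have keyA : ∀ x : A.domain, Γ x = 0 →
      ∃ x' : A.adjoint.domain, ((x' : H) = (x : H)) ∧ A.adjoint x' = A x ∧ Γs x' = 0 := by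
    intro x hx
    have hsym : ∀ v : A.domain, ⟪(x : H), A v⟫ = ⟪A x, (v : H)⟫ := by
      intro v
      have h := hLag v x
      rw [hx, inner_zero_left, mul_zero, sub_eq_zero] at h
      exact h
    have hxdom : (x : H) ∈ A.adjoint.domain :=
      LinearPMap.mem_adjoint_domain_of_exists _ ⟨A x, fun v => (hsym v).symm⟩
    have hval : A.adjoint ⟨(x : H), hxdom⟩ = A x :=
      LinearPMap.adjoint_apply_eq hdense _ (fun v => (hsym v).symm)
    refine ⟨⟨(x : H), hxdom⟩, rfl, hval, ?_⟩
    have h2 : (⟪(x : H), A x⟫).im = 0 := by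
      have := hIm x; rw [hx] at this; simp at this; linarith
    have h1 : (0 : ℝ) = -‖Γs (⟨(x : H), hxdom⟩ : A.adjoint.domain)‖^2 := by
      have h0 := hImS ⟨(x : H), hxdom⟩
      rw [hval] at h0
      rw [← h0]
      have hcoe : ((⟨(x : H), hxdom⟩ : A.adjoint.domain) : H) = (x : H) := rfl
      rw [show (⟪((⟨(x : H), hxdom⟩ : A.adjoint.domain) : H), (A x : H)⟫) = ⟪(x : H), (A x : H)⟫
        from by rw [hcoe], h2, mul_zero]
    have h3 : ‖Γs (⟨(x : H), hxdom⟩ : A.adjoint.domain)‖^2 = 0 := by linarith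
    exact norm_eq_zero.mp (pow_eq_zero_iff two_ne_zero |>.mp h3)
  -- keyS : adjoint-domain elements with vanishing Γs lie in the domain (maximality)
  have keyS : ∀ y : A.adjoint.domain, Γs y = 0 →
      ∃ y' : A.domain, ((y' : H) = (y : H)) ∧ A y' = A.adjoint y ∧ Γ y' = 0 := by
    intro y hy
    have hpair : ∀ v : A.domain, ⟪(A.adjoint y : H), (v : H)⟫ = ⟪(y : H), A v⟫ := fun v =>
      LinearPMap.adjoint_isFormalAdjoint hdense y v
    have himy : (⟪(y : H), A.adjoint y⟫).im = 0 := by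
      have := hImS y; rw [hy] at this; simp at this; linarith
    have hydom : (y : H) ∈ A.domain := by
      by_contra hmem
      set B := A.supSpanSingleton (y : H) (A.adjoint y) hmem with hB
      have hdom : B.domain = A.domain ⊔ (ℂ ∙ (y : H)) :=
        LinearPMap.domain_supSpanSingleton A (y : H) (A.adjoint y) hmem
      have hsub : A.domain ≤ B.domain := by rw [hdom]; exact le_sup_left
      have hAB : A ≤ B := by
        refine ⟨hsub, ?_⟩
        intro z₁ z₂ hz
        have hmem2 : (z₁ : H) + (0:ℂ) • (y : H) ∈ B.domain := by simpa [hz] using z₂.2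
        have hz2eq : z₂ = ⟨(z₁ : H) + (0:ℂ) • (y : H), hmem2⟩ := Subtype.ext (by simp [hz])
        rw [hz2eq]
        have happ := LinearPMap.supSpanSingleton_apply_mk A (y : H) (A.adjoint y) hmem
          (z₁ : H) z₁.2 0
        simp at happ ⊢; exact happ.symm
      have hBdiss : IsDissipative B := by
        constructor
        · exact hdense.mono (fun x hx => hsub hx)
        · intro w
          obtain ⟨a, ha, b, hb, hab⟩ := Submodule.mem_sup.mp
            (show (w : H) ∈ A.domain ⊔ (ℂ ∙ (y : H)) by rw [← hdom]; exact w.2)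
          obtain ⟨c, rfl⟩ := Submodule.mem_span_singleton.mp hb
          have hmemw : a + c • (y : H) ∈ B.domain := by rw [hab]; exact w.2
          have hweq : w = ⟨a + c • (y : H), hmemw⟩ := Subtype.ext hab.symm
          have happ := LinearPMap.supSpanSingleton_apply_mk A (y : H) (A.adjoint y) hmem a ha c
          rw [hweq]
          rw [show B ⟨a + c • (y : H), hmemw⟩ = A ⟨a, ha⟩ + c • A.adjoint y from happ]
          have hyA : ⟪(y : H), A ⟨a, ha⟩⟫ = (starRingEnd ℂ) ⟪a, (A.adjoint y : H)⟫ := by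
            rw [← hpair ⟨a, ha⟩, ← inner_conj_symm]
          have hexp : ⟪a + c • (y : H), A ⟨a, ha⟩ + c • (A.adjoint y : H)⟫
              = ⟪a, A ⟨a, ha⟩⟫
                + (c * ⟪a, (A.adjoint y : H)⟫ + (starRingEnd ℂ) (c * ⟪a, (A.adjoint y : H)⟫))
                + ((starRingEnd ℂ) c * c) * ⟪(y : H), (A.adjoint y : H)⟫ := by
            simp only [inner_add_left, inner_add_right, inner_smul_left, inner_smul_right,
              hyA, map_mul]
            ring
          rw [hexp]
          have e0 : (starRingEnd ℂ) c * c = ((Complex.normSq c : ℝ) : ℂ) := by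
            rw [mul_comm, Complex.mul_conj]
          rw [e0]
          simp only [Complex.add_im, Complex.conj_im, Complex.mul_im, Complex.ofReal_re,
            Complex.ofReal_im, himy]
          have := hdiss ⟨a, ha⟩
          simp only [mul_zero, zero_mul, add_zero, zero_add]
          linarith [this]
      have hBA := hmax B hBdiss hAB
      have : (y : H) ∈ B.domain := by
        rw [hdom]
        exact Submodule.mem_sup_right (Submodule.mem_span_singleton_self _)
      rw [hBA] at this
      exact hmem this
    set y' : A.domain := ⟨(y : H), hydom⟩ with hy'
    have hcoe : (y' : H) = (y : H) := rfl
    have himy2 : (⟪(y' : H), A y'⟫).im = 0 := by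
      have h4 : ⟪(y : H), (A.adjoint y : H)⟫ = (starRingEnd ℂ) ⟪(y' : H), A y'⟫ := by
        rw [← hpair y', ← inner_conj_symm, hcoe]
      rw [h4, Complex.conj_im] at himy
      linarith
    have hΓy : Γ y' = 0 := by
      have := hIm y'
      rw [himy2] at this
      have h3 : ‖Γ y'‖^2 = 0 := by linarith
      exact norm_eq_zero.mp (pow_eq_zero_iff two_ne_zero |>.mp h3)
    have hval : A y' = A.adjoint y := by
      apply hdense.eq_of_inner_left (𝕜 := ℂ)
      intro v' hv'
      obtain ⟨v, rfl⟩ : ∃ v : A.domain, (v : H) = v' := ⟨⟨v', hv'⟩, rfl⟩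
      have h := hLag v y'
      rw [hΓy, inner_zero_left, mul_zero, sub_eq_zero] at h
      rw [← h, hcoe, hpair v]
    exact ⟨y', hcoe, hval, hΓy⟩
  -- inner product imaginary part bounds
  have imle : ∀ a b : H, (⟪a, b⟫).im ≤ ‖a‖ * ‖b‖ := by
    intro a b
    calc (⟪a, b⟫).im ≤ |(⟪a, b⟫).im| := le_abs_self _
      _ ≤ ‖⟪a, b⟫‖ := Complex.abs_im_le_norm _
      _ = ‖⟪a, b⟫‖ := rfl
      _ ≤ ‖a‖ * ‖b‖ := norm_inner_le_norm _ _
  -- vanishing of Γ on Kᗮ ∩ domain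
  have hGamma0 : ∀ u : A.domain, (∀ lam, ∀ hl : 0 < lam.im, Gp lam ((u : H)) = 0) → Γ u = 0 := by
    intro u hu
    have key : ∀ t : ℝ, 0 < t → ‖Γ u‖^2 ≤ t * (4 * ‖A u‖^2) := by
      intro t ht
      set lam : ℂ := ((1/t : ℝ) : ℂ) * Complex.I with hlam
      have hlim : lam.im = 1/t := by simp [hlam]
      have hl : 0 < lam.im := by rw [hlim]; positivity
      obtain ⟨z, hz1, hz2⟩ := hR2 lam hl (A u)
      have h3 : Γ u = Γ z := by
        have e1 := hGp lam hl u
        rw [map_add, _root_.map_smul, hu lam hl, smul_zero, add_zero] at e1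
        have e2 := hGp lam hl z
        rw [hz2] at e2
        rw [← e1, ← e2]
      rw [h3]
      have hb0 : lam.im * ‖(z : H)‖ ≤ ‖A u‖ := by
        have := hRnorm lam hl (A u); rw [← hz1] at this; exact this
      have hnz : ‖(z : H)‖ ≤ t * ‖A u‖ := by
        rw [hlim] at hb0
        have h4 : (1/t) * ‖(z : H)‖ * t ≤ ‖A u‖ * t := by
          apply mul_le_mul_of_nonneg_right hb0 (le_of_lt ht)
        rw [one_div, inv_mul_eq_div, div_mul_eq_mul_div, mul_div_assoc, div_self (ne_of_gt ht),
          mul_one] at h4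
        linarith [h4]
      have hAz : ‖A z‖ ≤ 2 * ‖A u‖ := by
        have e5 : A z = A u - lam • (z : H) := eq_sub_of_add_eq hz2
        rw [e5]
        calc ‖A u - lam • (z : H)‖ ≤ ‖A u‖ + ‖lam • (z : H)‖ := norm_sub_le _ _
          _ = ‖A u‖ + ‖lam‖ * ‖(z : H)‖ := by rw [norm_smul]
          _ ≤ 2 * ‖A u‖ := by
              have hnl : ‖lam‖ = 1/t := by
                rw [hlam, norm_mul, Complex.norm_I, mul_one, Complex.norm_real,
                  Real.norm_eq_abs, abs_of_pos (by positivity)]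
              rw [hnl]
              have : (1/t) * ‖(z : H)‖ ≤ ‖A u‖ := by rw [← hlim]; exact hb0
              linarith
      have him := hIm z
      have e3 : (⟪(z : H), A z⟫).im ≤ ‖(z : H)‖ * ‖A z‖ := imle _ _
      have e6 : ‖(z : H)‖ * ‖A z‖ ≤ (t * ‖A u‖) * (2 * ‖A u‖) :=
        mul_le_mul hnz hAz (norm_nonneg _) (by positivity)
      nlinarith
    have hsq : ‖Γ u‖^2 ≤ 0 := le_zero_of_forall_le_mul' key
    have h7 : ‖Γ u‖^2 = 0 := le_antisymm hsq (sq_nonneg _)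
    exact norm_eq_zero.mp (pow_eq_zero_iff two_ne_zero |>.mp h7)
  -- invariance of Kᗮ under the resolvents R lam
  have hRinv : ∀ w, w ∈ Kᗮ → ∀ lam, ∀ hl : 0 < lam.im, ∃ x : A.domain,
      (x : H) = R lam hl w ∧ A x + lam • (x : H) = w ∧ (x : H) ∈ Kᗮ ∧ Γ x = 0 := by
    intro w hw lam hl
    obtain ⟨hGp0, hGm0⟩ := (hKmem w).mp hw
    obtain ⟨x, hx1, hx2⟩ := hR2 lam hl w
    have hΓx : Γ x = 0 := by
      have e1 := hGp lam hl x
      rw [hx2, hGp0 lam hl] at e1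
      exact e1.symm
    have hGpoff : ∀ nu, ∀ hn : 0 < nu.im, nu ≠ lam → Gp nu ((x : H)) = 0 := by
      intro nu hn hne
      have e1 := hGp nu hn x
      have e2 : A x + nu • (x : H) = w + (nu - lam) • (x : H) := by
        rw [← hx2, sub_smul]; abel
      rw [e2, map_add, _root_.map_smul, hGp0 nu hn, hΓx, zero_add] at e1
      have hnz : nu - lam ≠ 0 := sub_ne_zero.mpr hne
      exact (smul_eq_zero.mp e1).resolve_left hnz
    obtain ⟨x', hx'1, hx'2, hx'3⟩ := keyA x hΓx
    have hGmx : ∀ mu, ∀ hm : mu.im < 0, Gm mu ((x : H)) = 0 := by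
      intro mu hm
      have e1 := hGm mu hm x'
      have e2 : (A.adjoint x' : H) + mu • ((x' : H)) = w + (mu - lam) • (x : H) := by
        rw [hx'2, hx'1, ← hx2, sub_smul]; abel
      rw [e2, map_add, _root_.map_smul, hGm0 mu hm, hx'3, zero_add] at e1
      have hnz : mu - lam ≠ 0 := by
        intro hc
        rw [sub_eq_zero] at hc
        rw [hc] at hm
        linarith
      exact (smul_eq_zero.mp e1).resolve_left hnz
    have hGpdiag : Gp lam ((x : H)) = 0 := by
      apply norm_eq_zero_of_forall_le_mul' (D := ‖Gp lam‖ * ‖(x : H)‖ / lam.im)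
      intro t ht
      set nu : ℂ := lam + ((t : ℝ) : ℂ) * Complex.I with hnu
      have hnuim : nu.im = lam.im + t := by simp [hnu]
      have hn : 0 < nu.im := by rw [hnuim]; linarith
      have hne : nu ≠ lam := by
        intro hc
        have := congrArg Complex.im hc
        rw [hnuim] at this
        linarith
      obtain ⟨p, hp1, hp2⟩ := hR2 nu hn ((x : H))
      have hΓp : Γ p = 0 := by
        have e1 := hGp nu hn p
        rw [hp2, hGpoff nu hn hne] at e1
        exact e1.symm
      have e1 := hGp lam hl p
      have e2 : A p + lam • (p : H) = (x : H) - (nu - lam) • (p : H) := by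
        rw [← hp2, sub_smul]; abel
      rw [e2, map_sub, _root_.map_smul, hΓp] at e1
      have e3 : Gp lam ((x : H)) = (nu - lam) • Gp lam ((p : H)) := sub_eq_zero.mp e1
      have e4 : ‖nu - lam‖ = t := by
        rw [hnu, add_sub_cancel_left, norm_mul, Complex.norm_I, mul_one, Complex.norm_real,
          Real.norm_eq_abs, abs_of_pos ht]
      have e5 : lam.im * ‖(p : H)‖ ≤ ‖(x : H)‖ := by
        have e6 := hRnorm nu hn ((x : H))
        rw [← hp1] at e6
        rw [hnuim] at e6
        nlinarith [norm_nonneg (p : H)]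
      calc ‖Gp lam ((x : H))‖ = ‖nu - lam‖ * ‖Gp lam ((p : H))‖ := by rw [e3, norm_smul]
        _ = t * ‖Gp lam ((p : H))‖ := by rw [e4]
        _ ≤ t * (‖Gp lam‖ * ‖(x : H)‖ / lam.im) := by
            apply mul_le_mul_of_nonneg_left ?_ (le_of_lt ht)
            have b1 : ‖Gp lam ((p : H))‖ ≤ ‖Gp lam‖ * ‖(p : H)‖ := (Gp lam).le_opNorm _
            have b2 : ‖(p : H)‖ ≤ ‖(x : H)‖ / lam.im := by
              rw [le_div_iff₀ hl]
              nlinarith [e5]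
            calc ‖Gp lam ((p : H))‖ ≤ ‖Gp lam‖ * ‖(p : H)‖ := b1
              _ ≤ ‖Gp lam‖ * (‖(x : H)‖ / lam.im) :=
                  mul_le_mul_of_nonneg_left b2 (norm_nonneg _)
              _ = ‖Gp lam‖ * ‖(x : H)‖ / lam.im := by ring
    refine ⟨x, hx1, hx2, (hKmem _).mpr ⟨?_, hGmx⟩, hΓx⟩
    intro nu hn
    by_cases hne : nu = lam
    · subst hne; exact hGpdiag
    · exact hGpoff nu hn hne
  -- invariance of Kᗮ under the resolvents S mu of the adjoint
  have hSinv : ∀ w, w ∈ Kᗮ → ∀ mu, ∀ hm : mu.im < 0, ∃ y : A.domain,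
      (y : H) = S mu hm w ∧ A y + mu • (y : H) = w ∧ (y : H) ∈ Kᗮ ∧ Γ y = 0 := by
    intro w hw mu hm
    obtain ⟨hGp0, hGm0⟩ := (hKmem w).mp hw
    obtain ⟨yy, hy1, hy2⟩ := hS2 mu hm w
    have hΓsy : Γs yy = 0 := by
      have e1 := hGm mu hm yy
      rw [hy2, hGm0 mu hm] at e1
      exact e1.symm
    have hGmoff : ∀ nu, ∀ hn : nu.im < 0, nu ≠ mu → Gm nu ((yy : H)) = 0 := by
      intro nu hn hne
      have e1 := hGm nu hn yy
      have e2 : (A.adjoint yy : H) + nu • (yy : H) = w + (nu - mu) • (yy : H) := by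
        rw [← hy2, sub_smul]; abel
      rw [e2, map_add, _root_.map_smul, hGm0 nu hn, hΓsy, zero_add] at e1
      exact (smul_eq_zero.mp e1).resolve_left (sub_ne_zero.mpr hne)
    obtain ⟨y, hyc, hyval, hΓy⟩ := keyS yy hΓsy
    have hGpy : ∀ lam, ∀ hl : 0 < lam.im, Gp lam ((y : H)) = 0 := by
      intro lam hl
      have e1 := hGp lam hl y
      have e2 : A y + lam • (y : H) = w + (lam - mu) • (y : H) := by
        rw [hyval, hyc, ← hy2, sub_smul]; abel
      rw [e2, map_add, _root_.map_smul, hGp0 lam hl, hΓy, zero_add] at e1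
      have hnz : lam - mu ≠ 0 := by
        intro hc
        rw [sub_eq_zero] at hc
        rw [hc] at hl
        linarith
      exact (smul_eq_zero.mp e1).resolve_left hnz
    have hGmdiag : Gm mu ((yy : H)) = 0 := by
      apply norm_eq_zero_of_forall_le_mul' (D := ‖Gm mu‖ * ‖(yy : H)‖ / (-mu.im))
      intro t ht
      set nu : ℂ := mu - ((t : ℝ) : ℂ) * Complex.I with hnu
      have hnuim : nu.im = mu.im - t := by simp [hnu]
      have hn : nu.im < 0 := by rw [hnuim]; linarith
      have hne : nu ≠ mu := by
        intro hc
        have := congrArg Complex.im hc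
        rw [hnuim] at this
        linarith
      obtain ⟨p, hp1, hp2⟩ := hS2 nu hn ((yy : H))
      have hΓp : Γs p = 0 := by
        have e1 := hGm nu hn p
        rw [hp2, hGmoff nu hn hne] at e1
        exact e1.symm
      have e1 := hGm mu hm p
      have e2 : (A.adjoint p : H) + mu • (p : H) = (yy : H) - (nu - mu) • (p : H) := by
        rw [← hp2]; module
      rw [e2, map_sub, _root_.map_smul, hΓp] at e1
      have e3 : Gm mu ((yy : H)) = (nu - mu) • Gm mu ((p : H)) := sub_eq_zero.mp e1
      have e4 : ‖nu - mu‖ = t := by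
        rw [hnu, sub_sub_cancel_left, norm_neg, norm_mul, Complex.norm_I, mul_one,
          Complex.norm_real, Real.norm_eq_abs, abs_of_pos ht]
      have e5 : (-mu.im) * ‖(p : H)‖ ≤ ‖(yy : H)‖ := by
        have e6 := hSnorm nu hn ((yy : H))
        rw [← hp1] at e6
        rw [hnuim] at e6
        nlinarith [norm_nonneg (p : H)]
      have hmpos : 0 < -mu.im := by linarith
      calc ‖Gm mu ((yy : H))‖ = ‖nu - mu‖ * ‖Gm mu ((p : H))‖ := by rw [e3, norm_smul]
        _ = t * ‖Gm mu ((p : H))‖ := by rw [e4]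
        _ ≤ t * (‖Gm mu‖ * ‖(yy : H)‖ / (-mu.im)) := by
            apply mul_le_mul_of_nonneg_left ?_ (le_of_lt ht)
            have b1 : ‖Gm mu ((p : H))‖ ≤ ‖Gm mu‖ * ‖(p : H)‖ := (Gm mu).le_opNorm _
            have b2 : ‖(p : H)‖ ≤ ‖(yy : H)‖ / (-mu.im) := by
              rw [le_div_iff₀ hmpos]
              nlinarith [e5]
            calc ‖Gm mu ((p : H))‖ ≤ ‖Gm mu‖ * ‖(p : H)‖ := b1
              _ ≤ ‖Gm mu‖ * (‖(yy : H)‖ / (-mu.im)) :=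
                  mul_le_mul_of_nonneg_left b2 (norm_nonneg _)
              _ = ‖Gm mu‖ * ‖(yy : H)‖ / (-mu.im) := by ring
    have hGmy : ∀ nu, ∀ hn : nu.im < 0, Gm nu ((y : H)) = 0 := by
      intro nu hn
      rw [hyc]
      by_cases hne : nu = mu
      · subst hne; exact hGmdiag
      · exact hGmoff nu hn hne
    refine ⟨y, ?_, ?_, (hKmem _).mpr ⟨hGpy, hGmy⟩, hΓy⟩
    · rw [hyc, hy1]
    · rw [hyval, hyc, hy2]
  -- K is closed
  have hKclosed : IsClosed (K : Set H) := by
    rw [hK]; exact Submodule.isClosed_topologicalClosure _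
  haveI : CompleteSpace K := hKclosed.completeSpace_coe
  have hKoo : Kᗮᗮ = K := Submodule.orthogonal_orthogonal K
  have hIim : (0:ℝ) < (Complex.I).im := by simp
  have hnIim : (-Complex.I).im < 0 := by simp
  -- K is invariant under the resolvents R lam
  have hRK : ∀ k, k ∈ K → ∀ lam, ∀ hl : 0 < lam.im, R lam hl k ∈ K := by
    intro k hk lam hl
    rw [← hKoo, Submodule.mem_orthogonal]
    intro w hw
    have hm : ((starRingEnd ℂ) lam).im < 0 := by
      rw [Complex.conj_im]; linarith
    obtain ⟨y, _, hy2, hy3, hΓy⟩ := hSinv w hw ((starRingEnd ℂ) lam) hm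
    obtain ⟨x, hx1, hx2⟩ := hR2 lam hl k
    rw [← hx1, ← hy2]
    have hAyx : ⟪(A y : H), (x : H)⟫ = ⟪(y : H), (A x : H)⟫ := by
      have h := hLag x y
      rw [hΓy, inner_zero_left, mul_zero, sub_eq_zero] at h
      exact h.symm
    rw [inner_add_left, inner_smul_left, RingHomCompTriple.comp_apply]
    simp only [RingHom.id_apply]
    rw [hAyx, ← inner_smul_right, ← inner_add_right, hx2]
    have h0 : ⟪k, (y : H)⟫ = 0 := (Submodule.mem_orthogonal K ((y : H))).mp hy3 k hk
    rw [← inner_conj_symm, h0, map_zero]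
  -- a common decomposition construction for conclusions 1 and 2
  have hdecomp : ∀ u : A.domain, ∃ v : A.domain, (v : H) ∈ K ∧ (u : H) - (v : H) ∈ Kᗮ ∧
      A v ∈ K := by
    intro u
    obtain ⟨h₁, hh₁, h₂, hh₂, hsum⟩ :=
      K.exists_add_mem_mem_orthogonal (A u + Complex.I • (u : H))
    obtain ⟨v, hv1, hv2⟩ := hR2 Complex.I hIim h₁
    have hvK : (v : H) ∈ K := by rw [hv1]; exact hRK h₁ hh₁ Complex.I hIim
    refine ⟨v, hvK, ?_, ?_⟩
    · have hu : (u : H) = R Complex.I hIim (A u + Complex.I • (u : H)) :=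
        (hR1 Complex.I hIim u).symm
      have hdiff : (u : H) - (v : H) = R Complex.I hIim h₂ := by
        rw [hu, hv1, hsum, map_add]; abel
      obtain ⟨x, hx1, _, hx3, _⟩ := hRinv h₂ hh₂ Complex.I hIim
      rw [hdiff, ← hx1]
      exact hx3
    · have : A v = h₁ - Complex.I • (v : H) := eq_sub_of_add_eq hv2
      rw [this]
      exact Submodule.sub_mem _ hh₁ (Submodule.smul_mem _ _ hvK)
  refine ⟨fun u => ?_, fun u huK => ?_, fun u hu => ?_, ?_, fun u v hu hv => ?_,
    fun w hw => ?_, fun w hw => ?_⟩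
  -- Conclusion 1 : projections of domain elements
  · obtain ⟨v, h1, h2, _⟩ := hdecomp u
    exact ⟨v, h1, h2⟩
  -- Conclusion 2 : invariance of K
  · obtain ⟨v, h1, h2, h3⟩ := hdecomp u
    have hmem : (u : H) - (v : H) ∈ K := Submodule.sub_mem _ huK h1
    have h0 : (u : H) - (v : H) = 0 :=
      Submodule.disjoint_def.mp (Submodule.orthogonal_disjoint K) _ hmem h2
    have huv : u = v := Subtype.ext (by rw [← sub_eq_zero]; exact h0)
    rw [huv]
    exact h3
  -- Conclusion 3 : invariance of Kᗮ
  · obtain ⟨hGp0, hGm0⟩ := (hKmem _).mp hu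
    have hΓu : Γ u = 0 := hGamma0 u hGp0
    obtain ⟨u', hu'1, hu'2, hu'3⟩ := keyA u hΓu
    apply (hKmem _).mpr
    constructor
    · intro lam hl
      have e1 := hGp lam hl u
      rw [map_add, _root_.map_smul, hGp0 lam hl, smul_zero, add_zero, hΓu] at e1
      exact e1
    · intro mu hm
      have e1 := hGm mu hm u'
      rw [hu'2, hu'1, map_add, _root_.map_smul, hGm0 mu hm, smul_zero, add_zero, hu'3] at e1
      exact e1
  -- Conclusion 4a : density of the domain part in Kᗮ
  · intro w hw
    rw [Metric.mem_closure_iff]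
    intro ε hε
    have hwc : w ∈ closure (A.domain : Set H) := by rw [hdense.closure_eq]; trivial
    obtain ⟨u₀h, hu₀mem, hu₀close⟩ := Metric.mem_closure_iff.mp hwc (ε/4) (by linarith)
    set u₀ : A.domain := ⟨u₀h, hu₀mem⟩ with hu₀
    set t : ℝ := max 1 (8*‖A u₀‖/ε) with htdef
    have ht : 0 < t := lt_of_lt_of_le one_pos (le_max_left _ _)
    set lam : ℂ := ((t : ℝ) : ℂ) * Complex.I with hlam
    have hlim : lam.im = t := by simp [hlam]
    have hl : 0 < lam.im := by rw [hlim]; exact ht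
    obtain ⟨x, hx1, _, hx3, _⟩ := hRinv (lam • w) (Submodule.smul_mem _ _ hw) lam hl
    refine ⟨(x : H), ⟨x, hx3, rfl⟩, ?_⟩
    -- the key identity : R (lam • u₀) = u₀ - R (A u₀)
    have hid : R lam hl (lam • (u₀h : H)) = u₀h - R lam hl (A u₀) := by
      have e1 : lam • u₀h = (A u₀ + lam • (u₀h : H)) - A u₀ := by abel
      rw [e1, map_sub, hR1 lam hl u₀]
    have hsplit : w - (x : H) = (w - u₀h) + R lam hl (A u₀) - R lam hl (lam • (w - u₀h)) := by
      rw [hx1, smul_sub, map_sub, hid]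
      abel
    have hb1 : ‖w - u₀h‖ < ε/4 := by
      rw [← dist_eq_norm]; exact hu₀close
    have hb2 : ‖R lam hl (A u₀)‖ ≤ ε/8 := by
      have e6 := hRnorm lam hl (A u₀)
      rw [hlim] at e6
      have e7 : 8*‖A u₀‖/ε ≤ t := le_max_right _ _
      have e8 : 8*‖A u₀‖ ≤ t * ε := by
        rw [div_le_iff₀ hε] at e7; linarith
      nlinarith [norm_nonneg (R lam hl (A u₀))]
    have hb3 : ‖R lam hl (lam • (w - u₀h))‖ ≤ ‖w - u₀h‖ := by
      have e6 := hRnorm lam hl (lam • (w - u₀h))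
      rw [hlim] at e6
      rw [norm_smul] at e6
      have e9 : ‖lam‖ = t := by
        rw [hlam, norm_mul, Complex.norm_I, mul_one, Complex.norm_real,
          Real.norm_eq_abs, abs_of_pos ht]
      rw [e9] at e6
      nlinarith [norm_nonneg (w - u₀h)]
    rw [dist_eq_norm, hsplit]
    calc ‖(w - u₀h) + R lam hl (A u₀) - R lam hl (lam • (w - u₀h))‖
        ≤ ‖(w - u₀h) + R lam hl (A u₀)‖ + ‖R lam hl (lam • (w - u₀h))‖ := norm_sub_le _ _
      _ ≤ ‖w - u₀h‖ + ‖R lam hl (A u₀)‖ + ‖R lam hl (lam • (w - u₀h))‖ := by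
          have := norm_add_le (w - u₀h) (R lam hl (A u₀))
          linarith
      _ < ε := by linarith
  -- Conclusion 4b : symmetry on Kᗮ
  · have hΓu : Γ u = 0 := hGamma0 u ((hKmem _).mp hu).1
    have h := hLag u v
    rw [hΓu, inner_zero_right, mul_zero, sub_eq_zero] at h
    calc ⟪(A u : H), (v : H)⟫ = (starRingEnd ℂ) ⟪(v : H), (A u : H)⟫ := (inner_conj_symm _ _).symm
      _ = (starRingEnd ℂ) ⟪(A v : H), (u : H)⟫ := by rw [h]
      _ = ⟪(u : H), (A v : H)⟫ := inner_conj_symm _ _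
  -- Conclusion 4c
  · obtain ⟨x, _, hx2, hx3, _⟩ := hRinv w hw Complex.I hIim
    exact ⟨x, hx3, hx2⟩
  -- Conclusion 4d
  · obtain ⟨y, _, hy2, hy3, _⟩ := hSinv w hw (-Complex.I) hnIim
    refine ⟨y, hy3, ?_⟩
    rw [sub_eq_add_neg, ← neg_smul]
    exact hy2
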